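/- For the assignment-to-path correspondence in G^(q): the solid-arc s-t path X_σ determined by assignment σ passes through exactly q literal arcs of a path in clause gadget G^(q)_{(C^1,...,C^q)} if and only if σ satisfies all of C^1,...,C^q. Hence the number ℓ of clause gadgets containing an s-t path intersecting X_σ in exactly q literal arcs equals t^q, where t is the number of clauses satisfied by σ. -/
import Mathlib


/-- `σ` satisfies the literal `(i, b)` (meaning `x_i` if `b = true`, `¬x_i`
otherwise). -/
def SatLit {n : ℕ} (σ : Fin n → Bool) (l : Fin n × Bool) : Prop := σ l.1 = l.2

/-- `σ` satisfies the 3-clause `c` (a triple of literals). -/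
def SatClause {n : ℕ} (σ : Fin n → Bool) (c : Fin 3 → Fin n × Bool) : Prop :=
  ∃ a : Fin 3, SatLit σ (c a)

/-- A choice `f` of one literal from each clause of the tuple
`(C (T 0), …, C (T (q-1)))` is contradictory if it picks both `x_i` and `¬x_i`
for some `i`. -/
def Contradictory {n m q : ℕ} (C : Fin m → Fin 3 → Fin n × Bool)
    (T : Fin q → Fin m) (f : Fin q → Fin 3) : Prop :=
  ∃ j j' : Fin q, ∃ i : Fin n,
    C (T j) (f j) = (i, true) ∧ C (T j') (f j') = (i, false)

/-- In `G^(q)`: the solid path `X_σ` meets some literal path of the gadget of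
the clause tuple `T` in exactly `q` literal arcs — i.e. there is a
non-contradictory choice of one literal per clause of the tuple, all made true
by `σ` — iff `σ` satisfies all the clauses of the tuple. Hence the number `ℓ`
of such gadgets equals `t^q`, where `t` is the number of clauses satisfied
by `σ`. -/
theorem gadget_intersection_count (n m q t : ℕ)
    (C : Fin m → Fin 3 → Fin n × Bool) (σ : Fin n → Bool)
    (ht : Set.ncard {j : Fin m | SatClause σ (C j)} = t) :
    (∀ T : Fin q → Fin m,
      ((∃ f : Fin q → Fin 3, ¬ Contradictory C T f ∧
          ∀ j, SatLit σ (C (T j) (f j))) ↔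
        ∀ j, SatClause σ (C (T j)))) ∧
    Set.ncard {T : Fin q → Fin m | ∀ j, SatClause σ (C (T j))} = t ^ q := by
  constructor
  · intro T
    constructor
    · rintro ⟨f, -, hf⟩ j
      exact ⟨f j, hf j⟩
    · intro h
      choose f hf using h
      refine ⟨f, ?_, hf⟩
      rintro ⟨j, j', i, h1, h2⟩
      have e1 := hf j
      have e2 := hf j'
      rw [h1] at e1
      rw [h2] at e2
      simp [SatLit] at e1 e2
      rw [e1] at e2
      exact absurd e2 (by simp)
  · have : {T : Fin q → Fin m | ∀ j, SatClause σ (C (T j))} =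
        Set.pi Set.univ (fun _ : Fin q => {j : Fin m | SatClause σ (C j)}) := by
      ext T; simp [Set.mem_pi]
    rw [this]
    have hfin : ({j : Fin m | SatClause σ (C j)} : Set (Fin m)).Finite :=
      Set.toFinite _
    rw [← Nat.card_coe_set_eq]
    have e : (↥(Set.pi Set.univ (fun _ : Fin q => {j : Fin m | SatClause σ (C j)}))) ≃
        (Fin q → {j : Fin m | SatClause σ (C j)}) :=
      (Equiv.Set.univPi _)
    rw [Nat.card_congr e, Nat.card_fun, Nat.card_coe_set_eq, ht, Nat.card_eq_fintype_card,
      Fintype.card_fin]
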